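/- Fix N > e². Define φ̂⁽⁰⁾(u) = 1/√u on (1/N, 1) and φ̂⁽ᵏ⁾(u) = ∫_{1/N}^1 φ̂⁽ᵏ⁻¹⁾(s)/√(s(s+u)) ds for k ≥ 1. Then for every k ≥ 1 and u ∈ (1/N, 1): φ̂⁽ᵏ⁾(u) ≤ 32^k · (1/√u) · Σ_{i=0}^k (log(e²·N·u))^i / (2^i · i!) ≤ 32^k · e · √N. -/

import Mathlib

open Real Finset MeasureTheory

noncomputable def Ek (k : ℕ) (t : ℝ) : ℝ := ∑ i ∈ Finset.range (k+1), (t/4)^i / (Nat.factorial i : ℝ)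
noncomputable def Dk (k : ℕ) (t : ℝ) : ℝ := ∑ i ∈ Finset.range k, (t/4)^i / (Nat.factorial i : ℝ)

lemma Ek_nonneg {k : ℕ} {t : ℝ} (ht : 0 ≤ t) : 0 ≤ Ek k t := by
  apply Finset.sum_nonneg; intro i _
  exact div_nonneg (pow_nonneg (by linarith) i) (by positivity)

lemma Dk_le_Ek {k : ℕ} {t : ℝ} (ht : 0 ≤ t) : Dk k t ≤ Ek k t := by
  apply Finset.sum_le_sum_of_subset_of_nonneg (Finset.range_subset_range.2 (Nat.le_succ k))
  intro i _ _; exact div_nonneg (pow_nonneg (by linarith) i) (by positivity)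

lemma Ek_le_succ {k : ℕ} {t : ℝ} (ht : 0 ≤ t) : Ek k t ≤ Ek (k+1) t := by
  apply Finset.sum_le_sum_of_subset_of_nonneg (Finset.range_subset_range.2 (by omega))
  intro i _ _; exact div_nonneg (pow_nonneg (by linarith) i) (by positivity)

lemma continuous_Ek (k : ℕ) : Continuous (Ek k) := by
  unfold Ek
  exact continuous_finset_sum _ fun i _ => ((continuous_id.div_const 4).pow i).div_const _

lemma continuous_Dk (k : ℕ) : Continuous (Dk k) := by
  unfold Dk
  exact continuous_finset_sum _ fun i _ => ((continuous_id.div_const 4).pow i).div_const _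

lemma hasDerivAt_Ek (k : ℕ) (t : ℝ) : HasDerivAt (Ek k) (Dk k t / 4) t := by
  have h : ∀ i : ℕ, HasDerivAt (fun t : ℝ => (t/4)^i / (Nat.factorial i : ℝ))
      ((i : ℝ) * (t/4)^(i-1) * (1/4) / (Nat.factorial i : ℝ)) t := by
    intro i
    have h1 : HasDerivAt (fun t : ℝ => t/4) (1/4) t := (hasDerivAt_id t).div_const 4
    exact (h1.pow i).div_const _
  have hsum : HasDerivAt (fun t : ℝ => ∑ i ∈ Finset.range (k+1), (t/4)^i / (Nat.factorial i : ℝ))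
      (∑ i ∈ Finset.range (k+1), (i : ℝ) * (t/4)^(i-1) * (1/4) / (Nat.factorial i : ℝ)) t :=
    HasDerivAt.fun_sum (fun i _ => h i)
  convert hsum using 1
  · rfl
  rw [Finset.sum_range_succ']
  simp only [Nat.cast_zero, zero_mul, pow_zero, Nat.factorial_zero, Nat.cast_one, zero_div, add_zero,
    Nat.add_sub_cancel]
  rw [Dk, Finset.sum_div]
  apply Finset.sum_congr rfl
  intro i _
  have : ((i+1 : ℕ) : ℝ) ≠ 0 := by positivity
  rw [Nat.factorial_succ]
  push_cast
  field_simp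
noncomputable def phiHat (N : ℝ) : ℕ → ℝ → ℝ
  | 0, u => 1 / Real.sqrt u
  | k + 1, u => ∫ s in (1 / N)..1, phiHat N k s / Real.sqrt (s * (s + u))

lemma key (N : ℝ) (hN : Real.exp 2 < N) :
    ∀ k : ℕ, Measurable (phiHat N k) ∧ (∀ u, 0 ≤ phiHat N k u) ∧
      ∀ u ∈ Set.Icc (1/N) 1,
        phiHat N k u ≤ 8^k * (1 / Real.sqrt u) * Ek k (Real.log (Real.exp 2 * N * u)) := by
  have he2 : (1:ℝ) < Real.exp 2 := by
    have := Real.add_one_lt_exp (x := 2) (by norm_num); linarith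
  have hN1 : (1:ℝ) < N := lt_trans he2 hN
  have hN0 : (0:ℝ) < N := by linarith
  have ha0 : (0:ℝ) < 1/N := by positivity
  have ha1 : (1/N : ℝ) < 1 := by rw [div_lt_one hN0]; exact hN1
  set c : ℝ := Real.exp 2 * N with hc_def
  have hc0 : 0 < c := by positivity
  have hca : c * (1/N) = Real.exp 2 := by field_simp; rw [hc_def]; ring
  have hLa : Real.log (c * (1/N)) = 2 := by rw [hca, Real.log_exp]
  have hL0 : ∀ s : ℝ, 1/N ≤ s → 0 ≤ Real.log (c * s) := by
    intro s hs
    apply Real.log_nonneg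
    calc (1:ℝ) ≤ Real.exp 2 := he2.le
    _ = c * (1/N) := hca.symm
    _ ≤ c * s := by apply mul_le_mul_of_nonneg_left hs hc0.le
  intro k
  induction k with
  | zero =>
    refine ⟨measurable_const.div measurable_id.sqrt, fun u => by simp only [phiHat]; positivity, fun u hu => ?_⟩
    simp [phiHat, Ek]
  | succ k ih =>
    obtain ⟨hm, hnn, hb⟩ := ih
    -- measurability
    have hmeas : Measurable (phiHat N (k+1)) := by
      have heq : phiHat N (k+1) = fun u => ∫ s in Set.Ioc (1/N) 1,
          phiHat N k s / Real.sqrt (s * (s + u)) := by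
        funext u
        show (∫ s in (1/N)..1, phiHat N k s / Real.sqrt (s * (s + u))) = _
        rw [intervalIntegral.integral_of_le ha1.le]
      rw [heq]
      have hFm : StronglyMeasurable (Function.uncurry fun (u s : ℝ) =>
          phiHat N k s / Real.sqrt (s * (s + u))) := by
        apply Measurable.stronglyMeasurable
        exact (hm.comp measurable_snd).div ((measurable_snd.mul (measurable_snd.add measurable_fst)).sqrt)
      exact (hFm.integral_prod_right).measurable
    have hnn' : ∀ u, 0 ≤ phiHat N (k+1) u := by
      intro u
      show 0 ≤ ∫ s in (1/N)..1, phiHat N k s / Real.sqrt (s * (s + u))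
      apply intervalIntegral.integral_nonneg ha1.le
      intro s _
      exact div_nonneg (hnn s) (Real.sqrt_nonneg _)
    refine ⟨hmeas, hnn', ?_⟩
    rintro u ⟨hu1, hu2⟩
    have hu0 : 0 < u := lt_of_lt_of_le ha0 hu1
    have hsu : 0 < Real.sqrt u := Real.sqrt_pos.2 hu0
    set f : ℝ → ℝ := fun s => phiHat N k s / Real.sqrt (s * (s + u)) with hf_def
    set g1 : ℝ → ℝ := fun s => (8^k / Real.sqrt u) * (Ek k (Real.log (c * s)) / s) with hg1_def
    set g2 : ℝ → ℝ := fun s => 8^k * (Ek k (Real.log (c * s)) / (Real.sqrt s * s)) with hg2_def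
    -- pointwise bound f ≤ g2 on Icc (1/N) 1
    have hfg2 : ∀ s ∈ Set.Icc (1/N : ℝ) 1, f s ≤ g2 s := by
      intro s ⟨hs1, hs2⟩
      have hs0 : 0 < s := lt_of_lt_of_le ha0 hs1
      have hss : 0 < Real.sqrt s := Real.sqrt_pos.2 hs0
      have hker : s ≤ Real.sqrt (s * (s + u)) := by
        calc s = Real.sqrt (s^2) := (Real.sqrt_sq hs0.le).symm
        _ ≤ Real.sqrt (s * (s + u)) := Real.sqrt_le_sqrt (by nlinarith)
      have hB : phiHat N k s ≤ 8^k * (1 / Real.sqrt s) * Ek k (Real.log (c * s)) :=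
        hb s ⟨hs1, hs2⟩
      have hBnn : 0 ≤ 8^k * (1 / Real.sqrt s) * Ek k (Real.log (c * s)) := by
        have := Ek_nonneg (hL0 s hs1) (k := k); positivity
      calc f s ≤ (8^k * (1 / Real.sqrt s) * Ek k (Real.log (c * s))) / s :=
            div_le_div₀ hBnn hB hs0 hker
        _ = g2 s := by simp only [hg2_def]; ring
    -- pointwise bound f ≤ g1 on Icc (1/N) u
    have hfg1 : ∀ s ∈ Set.Icc (1/N : ℝ) u, f s ≤ g1 s := by
      intro s ⟨hs1, hs2⟩
      have hs0 : 0 < s := lt_of_lt_of_le ha0 hs1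
      have hss : 0 < Real.sqrt s := Real.sqrt_pos.2 hs0
      have hker : Real.sqrt s * Real.sqrt u ≤ Real.sqrt (s * (s + u)) := by
        rw [← Real.sqrt_mul hs0.le]
        apply Real.sqrt_le_sqrt
        nlinarith
      have hB : phiHat N k s ≤ 8^k * (1 / Real.sqrt s) * Ek k (Real.log (c * s)) :=
        hb s ⟨hs1, le_trans hs2 hu2⟩
      have hBnn : 0 ≤ 8^k * (1 / Real.sqrt s) * Ek k (Real.log (c * s)) := by
        have := Ek_nonneg (hL0 s hs1) (k := k); positivity
      calc f s ≤ (8^k * (1 / Real.sqrt s) * Ek k (Real.log (c * s))) / (Real.sqrt s * Real.sqrt u) :=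
            div_le_div₀ hBnn hB (by positivity) hker
        _ = (8^k / Real.sqrt u) * (Ek k (Real.log (c * s)) / (Real.sqrt s * Real.sqrt s)) := by
            ring
        _ = g1 s := by rw [Real.mul_self_sqrt hs0.le]
    -- continuity helpers
    have hcontL : ∀ (A B : ℝ), 1/N ≤ A → ContinuousOn (fun s => Ek k (Real.log (c * s))) (Set.Icc A B) := by
      intro A B hA
      apply (continuous_Ek k).comp_continuousOn
      apply ContinuousOn.log
      · exact (continuous_const.mul continuous_id).continuousOn
      · intro s hs
        have : 0 < s := lt_of_lt_of_le ha0 (le_trans hA hs.1)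
        positivity
    have hg2cont : ContinuousOn g2 (Set.Icc (1/N : ℝ) 1) := by
      apply ContinuousOn.mul continuousOn_const
      apply ContinuousOn.div (hcontL _ _ le_rfl)
      · exact (Real.continuous_sqrt.continuousOn.mul continuous_id.continuousOn)
      · intro s hs
        have hs0 : 0 < s := lt_of_lt_of_le ha0 hs.1
        have : 0 < Real.sqrt s := Real.sqrt_pos.2 hs0
        positivity
    have hIg2 : IntervalIntegrable g2 volume (1/N) 1 := by
      apply ContinuousOn.intervalIntegrable
      rwa [Set.uIcc_of_le ha1.le]
    -- integrability of f
    have hfmeas : AEStronglyMeasurable f (volume.restrict (Set.uIoc (1/N : ℝ) 1)) := by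
      apply Measurable.aestronglyMeasurable
      exact hm.div ((measurable_id.mul (measurable_id.add_const u)).sqrt)
    have hIf : IntervalIntegrable f volume (1/N) 1 := by
      apply hIg2.mono_fun hfmeas
      rw [Filter.EventuallyLE, ae_restrict_iff' measurableSet_uIoc]
      apply ae_of_all
      intro s hs
      rw [Set.uIoc_of_le ha1.le] at hs
      have hs' : s ∈ Set.Icc (1/N : ℝ) 1 := ⟨hs.1.le, hs.2⟩
      have h1 : 0 ≤ f s := div_nonneg (hnn s) (Real.sqrt_nonneg _)
      have h2 := hfg2 s hs'
      simp only [Real.norm_eq_abs]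
      rw [abs_of_nonneg h1]
      exact le_trans h2 (le_abs_self _)
    have hIau : IntervalIntegrable f volume (1/N) u :=
      hIf.mono_set (by rw [Set.uIcc_of_le ha1.le, Set.uIcc_of_le hu1]; exact Set.Icc_subset_Icc le_rfl hu2)
    have hIu1 : IntervalIntegrable f volume u 1 :=
      hIf.mono_set (by rw [Set.uIcc_of_le ha1.le, Set.uIcc_of_le hu2]; exact Set.Icc_subset_Icc hu1 le_rfl)
    -- derivative of the inner logarithm
    have hderivL : ∀ x : ℝ, 0 < x → HasDerivAt (fun s : ℝ => Real.log (c * s)) x⁻¹ x := by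
      intro x hx
      have h0 : HasDerivAt (fun s : ℝ => c * s) c x := by
        simpa using (hasDerivAt_id x).const_mul c
      have h1 := h0.log (by positivity)
      convert h1 using 1
      field_simp
    -- Part A : FTC for Ek k (log (c s)) / s
    have hAderiv : ∀ x : ℝ, 0 < x →
        HasDerivAt (fun s => 4 * Ek (k+1) (Real.log (c * s)) - 4) (Ek k (Real.log (c * x)) / x) x := by
      intro x hx
      have hE := (hasDerivAt_Ek (k+1) (Real.log (c * x))).comp x (hderivL x hx)
      have h2 : HasDerivAt (fun s => 4 * Ek (k+1) (Real.log (c * s)) - 4) _ x := (hE.const_mul (4:ℝ)).sub_const 4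
      convert h2 using 1
      show Ek k (Real.log (c * x)) / x = 4 * (Dk (k+1) (Real.log (c * x)) / 4 * x⁻¹)
      have hDE : Dk (k+1) = Ek k := rfl
      rw [hDE, div_eq_mul_inv]; ring
    have hb1cont : ContinuousOn (fun s => Ek k (Real.log (c * s)) / s) (Set.Icc (1/N) u) := by
      apply ContinuousOn.div (hcontL _ _ le_rfl) continuousOn_id
      intro s hs; exact ne_of_gt (lt_of_lt_of_le ha0 hs.1)
    have hA : (∫ s in (1/N)..u, Ek k (Real.log (c * s)) / s)
        = (4 * Ek (k+1) (Real.log (c * u)) - 4) - (4 * Ek (k+1) (Real.log (c * (1/N))) - 4) := by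
      apply intervalIntegral.integral_eq_sub_of_hasDerivAt
      · intro x hx
        rw [Set.uIcc_of_le hu1] at hx
        exact hAderiv x (lt_of_lt_of_le ha0 hx.1)
      · apply ContinuousOn.intervalIntegrable; rwa [Set.uIcc_of_le hu1]
    have hPA : (∫ s in (1/N)..u, f s) ≤ (8^k / Real.sqrt u) * (4 * Ek (k+1) (Real.log (c * u))) := by
      have h1 : (∫ s in (1/N)..u, f s) ≤ ∫ s in (1/N)..u, g1 s := by
        apply intervalIntegral.integral_mono_on hu1 hIau _ hfg1
        apply ContinuousOn.intervalIntegrable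
        rw [Set.uIcc_of_le hu1]
        exact continuousOn_const.mul hb1cont
      have h2 : (∫ s in (1/N)..u, g1 s)
          = (8^k / Real.sqrt u) * ∫ s in (1/N)..u, Ek k (Real.log (c * s)) / s := by
        simp only [hg1_def]
        rw [intervalIntegral.integral_const_mul]
      have h4 : (0:ℝ) ≤ Ek (k+1) (2:ℝ) := Ek_nonneg (by norm_num)
      have h3 : (∫ s in (1/N)..u, Ek k (Real.log (c * s)) / s)
          ≤ 4 * Ek (k+1) (Real.log (c * u)) := by
        rw [hA, hLa]; linarith
      calc (∫ s in (1/N)..u, f s) ≤ _ := h1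
        _ = _ := h2
        _ ≤ (8^k / Real.sqrt u) * (4 * Ek (k+1) (Real.log (c * u))) := by
            apply mul_le_mul_of_nonneg_left h3 (by positivity)
    -- Part B : FTC for Ek k (log (c s)) / (sqrt s * s)
    set Phi : ℝ → ℝ := fun s => -4 * (Ek k (Real.log (c * s)) * (Real.sqrt s)⁻¹) with hPhi_def
    set phi' : ℝ → ℝ := fun x =>
      (2 * Ek k (Real.log (c * x)) - Dk k (Real.log (c * x))) / (Real.sqrt x * x) with hphi'_def
    have hBderiv : ∀ x : ℝ, 0 < x → HasDerivAt Phi (phi' x) x := by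
      intro x hx
      have hsx : 0 < Real.sqrt x := Real.sqrt_pos.2 hx
      have h1 : HasDerivAt (fun s => Ek k (Real.log (c * s)))
          (Dk k (Real.log (c * x)) / 4 * x⁻¹) x :=
        (hasDerivAt_Ek k _).comp x (hderivL x hx)
      have h2 : HasDerivAt (fun s : ℝ => (Real.sqrt s)⁻¹)
          (-(1 / (2 * Real.sqrt x)) / (Real.sqrt x)^2) x :=
        (Real.hasDerivAt_sqrt (ne_of_gt hx)).inv (ne_of_gt hsx)
      have h3 : HasDerivAt Phi _ x := (h1.mul h2).const_mul (-4 : ℝ)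
      convert h3 using 1
      simp only [hphi'_def]
      rw [Real.sq_sqrt hx.le]
      field_simp
      ring
    have hphi'cont : ContinuousOn phi' (Set.Icc u 1) := by
      simp only [hphi'_def]
      apply ContinuousOn.div
      · apply ContinuousOn.sub
        · exact continuousOn_const.mul (hcontL u 1 hu1)
        · apply (continuous_Dk k).comp_continuousOn
          apply ContinuousOn.log
          · exact (continuous_const.mul continuous_id).continuousOn
          · intro s hs
            have : 0 < s := lt_of_lt_of_le hu0 hs.1
            positivity
      · exact Real.continuous_sqrt.continuousOn.mul continuous_id.continuousOn
      · intro s hs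
        have hs0 : 0 < s := lt_of_lt_of_le hu0 hs.1
        have : 0 < Real.sqrt s := Real.sqrt_pos.2 hs0
        positivity
    have hcontLu1 : ContinuousOn (fun s => Ek k (Real.log (c * s))) (Set.Icc u 1) := hcontL u 1 hu1
    have hb2cont : ContinuousOn (fun s => Ek k (Real.log (c * s)) / (Real.sqrt s * s)) (Set.Icc u 1) := by
      apply ContinuousOn.div hcontLu1
      · exact Real.continuous_sqrt.continuousOn.mul continuous_id.continuousOn
      · intro s hs
        have hs0 : 0 < s := lt_of_lt_of_le hu0 hs.1
        have : 0 < Real.sqrt s := Real.sqrt_pos.2 hs0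
        positivity
    have hBint : (∫ x in u..1, phi' x) = Phi 1 - Phi u := by
      apply intervalIntegral.integral_eq_sub_of_hasDerivAt
      · intro x hx
        rw [Set.uIcc_of_le hu2] at hx
        exact hBderiv x (lt_of_lt_of_le hu0 hx.1)
      · apply ContinuousOn.intervalIntegrable; rwa [Set.uIcc_of_le hu2]
    have hPB : (∫ x in u..1, f x) ≤ 8^k * (4 * (Ek k (Real.log (c * u)) * (Real.sqrt u)⁻¹)) := by
      have h1 : (∫ x in u..1, f x) ≤ ∫ x in u..1, g2 x := by
        apply intervalIntegral.integral_mono_on hu2 hIu1 _ (fun x hx => hfg2 x ⟨le_trans hu1 hx.1, hx.2⟩)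
        exact hIg2.mono_set (by rw [Set.uIcc_of_le ha1.le, Set.uIcc_of_le hu2]; exact Set.Icc_subset_Icc hu1 le_rfl)
      have h2 : (∫ x in u..1, g2 x)
          = 8^k * ∫ x in u..1, Ek k (Real.log (c * x)) / (Real.sqrt x * x) := by
        simp only [hg2_def]
        rw [intervalIntegral.integral_const_mul]
      have h3 : (∫ x in u..1, Ek k (Real.log (c * x)) / (Real.sqrt x * x)) ≤ ∫ x in u..1, phi' x := by
        apply intervalIntegral.integral_mono_on hu2
        · apply ContinuousOn.intervalIntegrable; rwa [Set.uIcc_of_le hu2]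
        · apply ContinuousOn.intervalIntegrable; rwa [Set.uIcc_of_le hu2]
        · intro x hx
          have hx0 : 0 < x := lt_of_lt_of_le hu0 hx.1
          have hsx : 0 < Real.sqrt x := Real.sqrt_pos.2 hx0
          have hxa : 1/N ≤ x := le_trans hu1 hx.1
          have hDE : Dk k (Real.log (c * x)) ≤ Ek k (Real.log (c * x)) := Dk_le_Ek (hL0 x hxa)
          have hden : (0:ℝ) < Real.sqrt x * x := by positivity
          simp only [hphi'_def]
          exact (div_le_div_iff_of_pos_right hden).2 (by linarith)
      have hlogc : (0:ℝ) ≤ Real.log (c * 1) := hL0 1 ha1.le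
      have hEu0 : (0:ℝ) ≤ Ek k (Real.log (c * 1)) := Ek_nonneg hlogc
      have h4 : (∫ x in u..1, phi' x) ≤ 4 * (Ek k (Real.log (c * u)) * (Real.sqrt u)⁻¹) := by
        rw [hBint]
        simp only [hPhi_def]
        rw [Real.sqrt_one]
        have : (1:ℝ)⁻¹ = 1 := inv_one
        rw [this, mul_one]
        nlinarith [Ek_nonneg (hL0 u hu1) (k := k), hsu.le]
      calc (∫ x in u..1, f x) ≤ _ := h1
        _ = _ := h2
        _ ≤ 8^k * ∫ x in u..1, phi' x := by
            apply mul_le_mul_of_nonneg_left h3 (by positivity)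
        _ ≤ 8^k * (4 * (Ek k (Real.log (c * u)) * (Real.sqrt u)⁻¹)) := by
            apply mul_le_mul_of_nonneg_left h4 (by positivity)
    -- combine
    have hsplit : (∫ s in (1/N)..u, f s) + (∫ s in u..1, f s) = ∫ s in (1/N)..1, f s :=
      intervalIntegral.integral_add_adjacent_intervals hIau hIu1
    have hphi : phiHat N (k+1) u = ∫ s in (1/N)..1, f s := rfl
    rw [hphi, ← hsplit]
    have hEle : Ek k (Real.log (c * u)) ≤ Ek (k+1) (Real.log (c * u)) := Ek_le_succ (hL0 u hu1)
    have hE0 : (0:ℝ) ≤ Ek (k+1) (Real.log (c * u)) := Ek_nonneg (hL0 u hu1)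
    calc (∫ s in (1/N)..u, f s) + (∫ s in u..1, f s)
        ≤ (8^k / Real.sqrt u) * (4 * Ek (k+1) (Real.log (c * u)))
          + 8^k * (4 * (Ek k (Real.log (c * u)) * (Real.sqrt u)⁻¹)) := add_le_add hPA hPB
      _ = (8^k * (Real.sqrt u)⁻¹) * (4 * Ek (k+1) (Real.log (c * u)) + 4 * Ek k (Real.log (c * u))) := by
          ring
      _ ≤ (8^k * (Real.sqrt u)⁻¹) * (8 * Ek (k+1) (Real.log (c * u))) := by
          apply mul_le_mul_of_nonneg_left (by linarith) (by positivity)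
      _ = 8^(k+1) * (1 / Real.sqrt u) * Ek (k+1) (Real.log (c * u)) := by
          rw [pow_succ]; ring


theorem stmt_15 (N : ℝ) (hN : Real.exp 2 < N) (k : ℕ) (hk : 1 ≤ k)
    (u : ℝ) (hu : u ∈ Set.Ioo (1 / N) 1) :
    phiHat N k u ≤ 32 ^ k * (1 / Real.sqrt u) *
        ∑ i ∈ Finset.range (k + 1),
          (Real.log (Real.exp 2 * N * u)) ^ i / (2 ^ i * (Nat.factorial i : ℝ)) ∧
    32 ^ k * (1 / Real.sqrt u) *
        ∑ i ∈ Finset.range (k + 1),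
          (Real.log (Real.exp 2 * N * u)) ^ i / (2 ^ i * (Nat.factorial i : ℝ))
      ≤ 32 ^ k * Real.exp 1 * Real.sqrt N := by
  obtain ⟨hu1, hu2⟩ := hu
  have he2 : (1:ℝ) < Real.exp 2 := by
    have := Real.add_one_lt_exp (x := 2) (by norm_num); linarith
  have hN1 : (1:ℝ) < N := lt_trans he2 hN
  have hN0 : (0:ℝ) < N := by linarith
  have ha0 : (0:ℝ) < 1/N := by positivity
  have hu0 : 0 < u := lt_trans ha0 hu1
  have hsu : 0 < Real.sqrt u := Real.sqrt_pos.2 hu0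
  set L : ℝ := Real.log (Real.exp 2 * N * u) with hL_def
  have hL0 : 0 ≤ L := by
    apply Real.log_nonneg
    have : Real.exp 2 * N * (1/N) ≤ Real.exp 2 * N * u :=
      mul_le_mul_of_nonneg_left hu1.le (by positivity)
    have h2 : Real.exp 2 * N * (1/N) = Real.exp 2 := by field_simp
    linarith [he2.le]
  have hsum_eq : (∑ i ∈ Finset.range (k + 1), L ^ i / (2 ^ i * (Nat.factorial i : ℝ)))
      = ∑ i ∈ Finset.range (k + 1), (L/2) ^ i / (Nat.factorial i : ℝ) := by
    apply Finset.sum_congr rfl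
    intro i _
    rw [div_pow, div_div]
  have hterm_nonneg : ∀ i : ℕ, (0:ℝ) ≤ (L/2) ^ i / (Nat.factorial i : ℝ) := by
    intro i; positivity
  have hS_nonneg : (0:ℝ) ≤ ∑ i ∈ Finset.range (k + 1), (L/2) ^ i / (Nat.factorial i : ℝ) :=
    Finset.sum_nonneg fun i _ => hterm_nonneg i
  constructor
  · -- first inequality
    have hkey := (key N hN k).2.2 u ⟨hu1.le, hu2.le⟩
    have hES : Ek k L ≤ ∑ i ∈ Finset.range (k + 1), (L/2) ^ i / (Nat.factorial i : ℝ) := by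
      apply Finset.sum_le_sum
      intro i _
      apply div_le_div_of_nonneg_right ?_ ?_ |>.trans_eq rfl
      · exact pow_le_pow_left₀ (by linarith) (by linarith) i
      · positivity
    rw [hsum_eq]
    calc phiHat N k u ≤ 8^k * (1 / Real.sqrt u) * Ek k L := hkey
      _ ≤ 32^k * (1 / Real.sqrt u) * ∑ i ∈ Finset.range (k + 1), (L/2) ^ i / (Nat.factorial i : ℝ) := by
          apply mul_le_mul
          · apply mul_le_mul_of_nonneg_right _ (by positivity)
            exact pow_le_pow_left₀ (by norm_num) (by norm_num) k
          · exact hES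
          · exact Ek_nonneg hL0
          · positivity
  · -- second inequality
    have hSexp : (∑ i ∈ Finset.range (k + 1), (L/2) ^ i / (Nat.factorial i : ℝ))
        ≤ Real.exp (L/2) := Real.sum_le_exp_of_nonneg (by linarith) (k+1)
    have hpos : (0:ℝ) < Real.exp 2 * N * u := by positivity
    have hexp_sqrt : Real.exp (L/2) = Real.exp 1 * Real.sqrt N * Real.sqrt u := by
      have h1 : Real.exp (L/2) * Real.exp (L/2) = Real.exp 2 * N * u := by
        rw [← Real.exp_add]
        have : L/2 + L/2 = L := by ring
        rw [this, hL_def, Real.exp_log hpos]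
      have h2 : Real.sqrt (Real.exp 2 * N * u) = Real.exp (L/2) := by
        rw [← h1, Real.sqrt_mul_self (Real.exp_pos _).le]
      rw [← h2]
      rw [Real.sqrt_mul (by positivity), Real.sqrt_mul (Real.exp_pos 2).le]
      have h3 : Real.exp 2 = Real.exp 1 * Real.exp 1 := by
        rw [← Real.exp_add]; norm_num
      rw [h3, Real.sqrt_mul_self (Real.exp_pos 1).le]
    rw [hsum_eq]
    calc 32^k * (1 / Real.sqrt u) * ∑ i ∈ Finset.range (k + 1), (L/2) ^ i / (Nat.factorial i : ℝ)
        ≤ 32^k * (1 / Real.sqrt u) * (Real.exp 1 * Real.sqrt N * Real.sqrt u) := by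
          rw [← hexp_sqrt]
          exact mul_le_mul_of_nonneg_left hSexp (by positivity)
      _ = 32^k * Real.exp 1 * Real.sqrt N := by
          field_simp
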